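/- arXiv:0912.1194 — 3 statements merged into one kernel-verified Lean document; each statement's English description precedes it below -/
import Mathlib

section
/- Under conditions (C1) and (C2), the growth-rate functional γ is upper semicontinuous on the space of probability measures on T endowed with the topology of weak convergence: if p_n converges weakly to p, then limsup_n γ(p_n) ≤ γ(p). -/
open MeasureTheory
open scoped ENNReal NNReal

/-- The mean offspring number `m_{p,e} = ∫_T m_{t,e} p(dt)` of a strategy `p`. -/
noncomputable def mbar {T E : Type*} [MeasurableSpace T] (m : T → E → ℝ)
    (p : Measure T) (e : E) : ℝ :=
  ∫ t, m t e ∂p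

/-- The growth rate `γ(p) = ∫_E log(m_{p,e}) ν(de)`, an extended real number in `[-∞, ∞)`. -/
noncomputable def growth {T E : Type*} [MeasurableSpace T] [MeasurableSpace E]
    (m : T → E → ℝ) (ν : Measure E) (p : Measure T) : EReal :=
  ((∫⁻ e, ENNReal.ofReal (Real.log (mbar m p e)) ∂ν : ℝ≥0∞) : EReal) -
    ((∫⁻ e, ENNReal.ofReal (-Real.log (mbar m p e)) ∂ν : ℝ≥0∞) : EReal)

/-- under (C1) and (C2), the growth-rate functional `γ` is upper semicontinuous
on the space of probability measures on `T` with the topology of weak convergence: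
if `p_n → p` weakly, then `limsup_n γ(p_n) ≤ γ(p)`. -/
theorem growth_upper_semicontinuous
    {T E : Type*} [MetricSpace T] [MeasurableSpace T] [BorelSpace T]
    [TopologicalSpace E] [PolishSpace E] [MeasurableSpace E] [BorelSpace E]
    (ν₁ : Measure E) [IsProbabilityMeasure ν₁]
    (m : T → E → ℝ) (hm : Measurable (Function.uncurry m))
    (hnonneg : ∀ t e, 0 ≤ m t e)
    (M : ℝ) (hM : 0 < M) (hC1 : ∀ t e, m t e ≤ M)
    (hC2 : ∀ e, Continuous fun t => m t e)
    (pn : ℕ → ProbabilityMeasure T) (p : ProbabilityMeasure T)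
    (hconv : Filter.Tendsto pn Filter.atTop (nhds p)) :
    Filter.limsup (fun n => growth m ν₁ (pn n : Measure T)) Filter.atTop ≤
      growth m ν₁ (p : Measure T) := by
  classical
  open Filter in
  -- basic facts about `mbar`
  have h_meas_me : ∀ e : E, Measurable fun t => m t e := fun e =>
    hm.comp (measurable_id.prodMk measurable_const)
  have h_int : ∀ (q : ProbabilityMeasure T) (e : E),
      Integrable (fun t => m t e) (q : Measure T) := by
    intro q e
    refine (integrable_const M).mono' (h_meas_me e).aestronglyMeasurable
      (Filter.Eventually.of_forall fun t => ?_)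
    rw [Real.norm_eq_abs, abs_of_nonneg (hnonneg t e)]
    exact hC1 t e
  have h_nonneg : ∀ (q : ProbabilityMeasure T) (e : E), 0 ≤ mbar m (q : Measure T) e :=
    fun q e => integral_nonneg fun t => hnonneg t e
  have h_le_M : ∀ (q : ProbabilityMeasure T) (e : E), mbar m (q : Measure T) e ≤ M := by
    intro q e
    have : mbar m (q : Measure T) e ≤ ∫ _t, M ∂(q : Measure T) :=
      integral_mono (h_int q e) (integrable_const M) fun t => hC1 t e
    simpa using this
  -- measurability of `e ↦ mbar m q e`
  have h_mbar_meas : ∀ q : ProbabilityMeasure T,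
      Measurable fun e => mbar m (q : Measure T) e := by
    intro q
    have h1 : (fun e => mbar m (q : Measure T) e) =
        fun e => (∫⁻ t, ENNReal.ofReal (m t e) ∂(q : Measure T)).toReal := by
      funext e
      exact integral_eq_lintegral_of_nonneg_ae
        (Filter.Eventually.of_forall fun t => hnonneg t e)
        (h_meas_me e).aestronglyMeasurable
    rw [h1]
    have h2 : Measurable fun ep : E × T => ENNReal.ofReal (m ep.2 ep.1) :=
      ENNReal.measurable_ofReal.comp (hm.comp measurable_swap)
    exact (Measurable.lintegral_prod_right' h2).ennreal_toReal
  -- pointwise convergence of `mbar` from weak convergence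
  have h_tend : ∀ e : E, Filter.Tendsto (fun n => mbar m ((pn n) : Measure T) e)
      Filter.atTop (nhds (mbar m (p : Measure T) e)) := by
    intro e
    have hdist : ∀ x y : T, dist (m x e) (m y e) ≤ M := by
      intro x y
      rw [Real.dist_eq, abs_sub_le_iff]
      constructor
      · linarith [hnonneg y e, hC1 x e]
      · linarith [hnonneg x e, hC1 y e]
    let f : BoundedContinuousFunction T ℝ :=
      BoundedContinuousFunction.mkOfBound ⟨fun t => m t e, hC2 e⟩ M hdist
    exact ProbabilityMeasure.tendsto_iff_forall_integral_tendsto.mp hconv f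
  -- positive and negative parts
  set Apos : ProbabilityMeasure T → ℝ≥0∞ :=
    fun q => ∫⁻ e, ENNReal.ofReal (Real.log (mbar m (q : Measure T) e)) ∂ν₁ with hApos
  set Bneg : ProbabilityMeasure T → ℝ≥0∞ :=
    fun q => ∫⁻ e, ENNReal.ofReal (-Real.log (mbar m (q : Measure T) e)) ∂ν₁ with hBneg
  have hgrowth : ∀ q : ProbabilityMeasure T,
      growth m ν₁ (q : Measure T) = ((Apos q : ℝ≥0∞) : EReal) - ((Bneg q : ℝ≥0∞) : EReal) :=
    fun q => rfl
  set C0 : ℝ≥0∞ := ENNReal.ofReal (max (Real.log M) 0) with hC0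
  have hbound : ∀ (q : ProbabilityMeasure T) (e : E),
      ENNReal.ofReal (Real.log (mbar m (q : Measure T) e)) ≤ C0 := by
    intro q e
    rcases eq_or_lt_of_le (h_nonneg q e) with h | h
    · simp [← h, Real.log_zero]
    · refine ENNReal.ofReal_le_ofReal (le_trans ?_ (le_max_left _ _))
      exact Real.log_le_log h (h_le_M q e)
  have hmeas_pos : ∀ q : ProbabilityMeasure T,
      Measurable fun e => ENNReal.ofReal (Real.log (mbar m (q : Measure T) e)) :=
    fun q => ENNReal.measurable_ofReal.comp (Real.measurable_log.comp (h_mbar_meas q))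
  have hmeas_neg : ∀ q : ProbabilityMeasure T,
      Measurable fun e => ENNReal.ofReal (-Real.log (mbar m (q : Measure T) e)) :=
    fun q => ENNReal.measurable_ofReal.comp
      ((Real.measurable_log.comp (h_mbar_meas q)).neg)
  -- pointwise limsup bound for the positive part
  have hpt_pos : ∀ e : E,
      Filter.limsup (fun n => ENNReal.ofReal (Real.log (mbar m ((pn n) : Measure T) e)))
        Filter.atTop ≤ ENNReal.ofReal (Real.log (mbar m (p : Measure T) e)) := by
    intro e
    rcases eq_or_lt_of_le (h_nonneg p e) with h0 | hpos
    · rw [← h0, Real.log_zero, ENNReal.ofReal_zero]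
      refine Filter.limsup_le_of_le (by isBoundedDefault) ?_
      have hlt : ∀ᶠ n in Filter.atTop, mbar m ((pn n) : Measure T) e < 1 := by
        have := h_tend e
        rw [← h0] at this
        exact this.eventually_lt_const one_pos
      filter_upwards [hlt] with n hn
      simp [ENNReal.ofReal_eq_zero.mpr (Real.log_nonpos (h_nonneg (pn n) e) hn.le)]
    · have hcont : ContinuousAt (fun x : ℝ => ENNReal.ofReal (Real.log x))
          (mbar m (p : Measure T) e) :=
        ENNReal.continuous_ofReal.continuousAt.comp (Real.continuousAt_log hpos.ne')
      exact (hcont.tendsto.comp (h_tend e)).limsup_eq.le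
  -- pointwise liminf bound for the negative part
  have hpt_neg : ∀ e : E,
      ENNReal.ofReal (-Real.log (mbar m (p : Measure T) e)) ≤
        Filter.liminf (fun n => ENNReal.ofReal (-Real.log (mbar m ((pn n) : Measure T) e)))
          Filter.atTop := by
    intro e
    rcases eq_or_lt_of_le (h_nonneg p e) with h0 | hpos
    · rw [← h0, Real.log_zero]
      simp
    · have hcont : ContinuousAt (fun x : ℝ => ENNReal.ofReal (-Real.log x))
          (mbar m (p : Measure T) e) :=
        ENNReal.continuous_ofReal.continuousAt.comp
          ((Real.continuousAt_log hpos.ne').neg)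
      exact (hcont.tendsto.comp (h_tend e)).liminf_eq.ge
  -- reverse Fatou for the positive part
  have hC0fin : ∫⁻ _e, C0 ∂ν₁ ≠ ⊤ := by
    simp only [lintegral_const, measure_univ, mul_one]
    exact ENNReal.ofReal_ne_top
  have hA : Filter.limsup (fun n => Apos (pn n)) Filter.atTop ≤ Apos p := by
    refine le_trans (limsup_lintegral_le (fun _ => C0) (fun n => hmeas_pos (pn n))
      (fun n => Filter.Eventually.of_forall fun e => hbound (pn n) e) hC0fin) ?_
    exact lintegral_mono fun e => hpt_pos e
  -- Fatou for the negative part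
  have hB : Bneg p ≤ Filter.liminf (fun n => Bneg (pn n)) Filter.atTop := by
    refine le_trans (lintegral_mono fun e => hpt_neg e) ?_
    exact lintegral_liminf_le fun n => hmeas_neg (pn n)
  -- pass to EReal
  have hmono : Monotone ((↑) : ℝ≥0∞ → EReal) := EReal.coe_ennreal_strictMono.monotone
  have hmapA : Filter.limsup (fun n => ((Apos (pn n) : ℝ≥0∞) : EReal)) Filter.atTop =
      ((Filter.limsup (fun n => Apos (pn n)) Filter.atTop : ℝ≥0∞) : EReal) :=
    (hmono.map_limsup_of_continuousAt (fun n => Apos (pn n))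
      continuous_coe_ennreal_ereal.continuousAt).symm
  have hmapB : Filter.liminf (fun n => ((Bneg (pn n) : ℝ≥0∞) : EReal)) Filter.atTop =
      ((Filter.liminf (fun n => Bneg (pn n)) Filter.atTop : ℝ≥0∞) : EReal) :=
    (hmono.map_liminf_of_continuousAt (fun n => Bneg (pn n))
      continuous_coe_ennreal_ereal.continuousAt).symm
  -- final EReal computation
  have hApfin : Apos p ≠ ⊤ :=
    ne_top_of_le_ne_top hC0fin (lintegral_mono fun e => hbound p e)
  have hlimfin : Filter.limsup (fun n => Apos (pn n)) Filter.atTop ≠ ⊤ :=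
    ne_top_of_le_ne_top hApfin hA
  have hAne_top : Filter.limsup (fun n => ((Apos (pn n) : ℝ≥0∞) : EReal)) Filter.atTop ≠ ⊤ := by
    rw [hmapA]
    exact fun h => hlimfin (EReal.coe_ennreal_eq_top_iff.mp h)
  have hAne_bot : Filter.limsup (fun n => ((Apos (pn n) : ℝ≥0∞) : EReal)) Filter.atTop ≠ ⊥ := by
    rw [hmapA]
    exact (EReal.bot_lt_coe_ennreal _).ne'
  calc Filter.limsup (fun n => growth m ν₁ ((pn n) : Measure T)) Filter.atTop
      = Filter.limsup (fun n => ((Apos (pn n) : ℝ≥0∞) : EReal) +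
          (-(((Bneg (pn n) : ℝ≥0∞)) : EReal))) Filter.atTop := by
        refine congrArg (fun f => Filter.limsup f Filter.atTop) ?_
        funext n
        rw [hgrowth (pn n), sub_eq_add_neg]
    _ ≤ Filter.limsup (fun n => ((Apos (pn n) : ℝ≥0∞) : EReal)) Filter.atTop +
          Filter.limsup (fun n => -(((Bneg (pn n) : ℝ≥0∞)) : EReal)) Filter.atTop := by
        apply EReal.limsup_add_le
        · exact Or.inl hAne_bot
        · exact Or.inl hAne_top
    _ = ((Filter.limsup (fun n => Apos (pn n)) Filter.atTop : ℝ≥0∞) : EReal) +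
          (-(((Filter.liminf (fun n => Bneg (pn n)) Filter.atTop : ℝ≥0∞)) : EReal)) := by
        rw [← hmapA]
        congr 1
        rw [show (fun n => -(((Bneg (pn n) : ℝ≥0∞)) : EReal)) =
          (-(fun n => ((Bneg (pn n) : ℝ≥0∞) : EReal))) from rfl, EReal.limsup_neg, hmapB]
    _ ≤ ((Apos p : ℝ≥0∞) : EReal) + (-((Bneg p : ℝ≥0∞) : EReal)) := by
        apply add_le_add
        · exact EReal.coe_ennreal_le_coe_ennreal_iff.mpr hA
        · exact EReal.neg_le_neg_iff.mpr (EReal.coe_ennreal_le_coe_ennreal_iff.mpr hB)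
    _ = growth m ν₁ (p : Measure T) := by
        rw [hgrowth p, sub_eq_add_neg]
end

section
/- If ν₂ is a product measure, ν₂ = ν₁ ⊗ ν₁ (i.e. the two consecutive environment states are independent), then the optimal growth rates with and without sensing coincide: γ** = γ*. -/
open MeasureTheory ProbabilityTheory
open scoped ENNReal NNReal

/-- The top Lyapounov exponent without sensing,
`γ* = sup{γ(p) : p a probability measure on T}`. -/
noncomputable def gammaStar {T E : Type*} [MeasurableSpace T] [MeasurableSpace E]
    (m : T → E → ℝ) (ν : Measure E) : EReal :=
  ⨆ p : {q : Measure T // IsProbabilityMeasure q}, growth m ν (p : Measure T)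

/-- The growth rate `γ(p̄) = ∫_{E×E} log(m_{p̄(e₁),e₂}) ν₂(de₁,de₂)` of a strategy with
sensing `p̄` (a Markov kernel from `E` to `T`), an extended real number in `[-∞, ∞)`. -/
noncomputable def growthSensing {T E : Type*} [MeasurableSpace T] [MeasurableSpace E]
    (m : T → E → ℝ) (ν₂ : Measure (E × E)) (pbar : Kernel E T) : EReal :=
  ((∫⁻ q, ENNReal.ofReal (Real.log (mbar m (pbar q.1) q.2)) ∂ν₂ : ℝ≥0∞) : EReal) -
    ((∫⁻ q, ENNReal.ofReal (-Real.log (mbar m (pbar q.1) q.2)) ∂ν₂ : ℝ≥0∞) : EReal)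

/-- The optimal growth rate with sensing `γ**`. -/
noncomputable def gammaStarStar {T E : Type*} [MeasurableSpace T] [MeasurableSpace E]
    (m : T → E → ℝ) (ν₂ : Measure (E × E)) : EReal :=
  ⨆ pbar : {κ : Kernel E T // IsMarkovKernel κ}, growthSensing m ν₂ (pbar : Kernel E T)

/-- if `ν₂ = ν₁ ⊗ ν₁` is a product measure (the two consecutive environment
states are independent), then the optimal growth rates with and without sensing coincide:
`γ** = γ*`. -/
theorem no_gain_from_sensing_of_independent
    {T E : Type*} [MetricSpace T] [MeasurableSpace T] [BorelSpace T] [Nonempty T]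
    [TopologicalSpace E] [PolishSpace E] [MeasurableSpace E] [BorelSpace E]
    (ν₁ : Measure E) [IsProbabilityMeasure ν₁]
    (m : T → E → ℝ) (hm : Measurable (Function.uncurry m))
    (hnonneg : ∀ t e, 0 ≤ m t e)
    (M : ℝ) (hM : 0 < M) (hC1 : ∀ t e, m t e ≤ M)
    (hC2 : ∀ e, Continuous fun t => m t e)
    (hC3 : ∀ e, ∀ ε > (0 : ℝ), ∃ K : Set T, IsCompact K ∧ ∀ t ∉ K, m t e ≤ ε) :
    gammaStarStar m (ν₁.prod ν₁) = gammaStar m ν₁ := by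
  classical
  -- coercion helper
  have coeE : ∀ (a : ℝ≥0∞), a ≠ ⊤ → (a : EReal) = ((a.toReal : ℝ) : EReal) := by
    intro a ha
    conv_lhs => rw [← ENNReal.ofReal_toReal ha]
    rw [EReal.coe_ennreal_ofReal, max_eq_left ENNReal.toReal_nonneg]
  -- basic facts about `mbar`
  have hmeas_e : ∀ e : E, Measurable fun t => m t e := fun e =>
    hm.comp (measurable_id.prodMk measurable_const)
  have hmbar_nonneg : ∀ (p : Measure T) (e : E), 0 ≤ mbar m p e := fun p e =>
    integral_nonneg fun t => hnonneg t e
  have hint : ∀ (p : Measure T), IsProbabilityMeasure p →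
      ∀ e, Integrable (fun t => m t e) p := by
    intro p hp e
    exact (integrable_const M).mono' (hmeas_e e).aestronglyMeasurable
      (ae_of_all _ fun t => by
        rw [Real.norm_eq_abs, abs_of_nonneg (hnonneg t e)]; exact hC1 t e)
  have hmbarM : ∀ (p : Measure T), IsProbabilityMeasure p → ∀ e, mbar m p e ≤ M := by
    intro p hp e
    calc mbar m p e ≤ ∫ _, M ∂p := integral_mono (hint p hp e) (integrable_const M)
          (fun t => hC1 t e)
      _ = M := by simp
  set c : ℝ≥0∞ := ENNReal.ofReal (Real.log M) with hc
  have hcne : c ≠ ⊤ := ENNReal.ofReal_ne_top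
  have hlogbd : ∀ x : ℝ, 0 ≤ x → x ≤ M →
      ENNReal.ofReal (Real.log x) ≤ c := by
    intro x hx hxM
    rcases eq_or_lt_of_le hx with h | h
    · simp [← h]
    · exact ENNReal.ofReal_le_ofReal (Real.log_le_log h hxM)
  -- joint measurability of `(e₁, e₂) ↦ mbar m (κ e₁) e₂`
  have hjoint : ∀ (κ : Kernel E T), IsSFiniteKernel κ →
      Measurable fun q : E × E => mbar m (κ q.1) q.2 := by
    intro κ hκ
    haveI := hκ
    have hf : StronglyMeasurable fun x : (E × E) × T => m x.2 x.1.2 :=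
      (hm.comp (measurable_snd.prodMk (measurable_snd.comp measurable_fst))).stronglyMeasurable
    have h2 := hf.integral_kernel_prod_right' (κ := κ.comap Prod.fst measurable_fst)
    exact h2.measurable
  -- marginal computation for functions of the second coordinate
  have hsnd : ∀ F : E → ℝ≥0∞, Measurable F →
      ∫⁻ q : E × E, F q.2 ∂(ν₁.prod ν₁) = ∫⁻ e, F e ∂ν₁ := by
    intro F hF
    rw [MeasureTheory.lintegral_prod (fun q : E × E => F q.2)
      ((hF.comp measurable_snd).aemeasurable)]
    simp
  -- growthSensing of a constant kernel equals growth
  have hconst : ∀ (p : Measure T), IsProbabilityMeasure p →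
      growthSensing m (ν₁.prod ν₁) (Kernel.const E p) = growth m ν₁ p := by
    intro p hp
    haveI := hp
    have hmb : Measurable fun e : E => mbar m p e := by
      have hf : StronglyMeasurable fun x : E × T => m x.2 x.1 :=
        (hm.comp (measurable_snd.prodMk measurable_fst)).stronglyMeasurable
      exact (hf.integral_kernel_prod_right' (κ := Kernel.const E p)).measurable
    unfold growthSensing growth
    have e1 : ∫⁻ q : E × E, ENNReal.ofReal (Real.log (mbar m ((Kernel.const E p) q.1) q.2))
        ∂(ν₁.prod ν₁) = ∫⁻ e, ENNReal.ofReal (Real.log (mbar m p e)) ∂ν₁ := by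
      simp only [Kernel.const_apply]
      exact hsnd _ (hmb.log.ennreal_ofReal)
    have e2 : ∫⁻ q : E × E, ENNReal.ofReal (-Real.log (mbar m ((Kernel.const E p) q.1) q.2))
        ∂(ν₁.prod ν₁) = ∫⁻ e, ENNReal.ofReal (-Real.log (mbar m p e)) ∂ν₁ := by
      simp only [Kernel.const_apply]
      exact hsnd _ (hmb.log.neg.ennreal_ofReal)
    rw [e1, e2]
  -- direction ≤ : any markov kernel does no better than γ*
  have hle : gammaStarStar m (ν₁.prod ν₁) ≤ gammaStar m ν₁ := by
    refine iSup_le ?_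
    rintro ⟨κ, hκ⟩
    haveI := hκ
    have hmeasq := hjoint κ inferInstance
    have hF : Measurable fun q : E × E => ENNReal.ofReal (Real.log (mbar m (κ q.1) q.2)) :=
      hmeasq.log.ennreal_ofReal
    have hG : Measurable fun q : E × E => ENNReal.ofReal (-Real.log (mbar m (κ q.1) q.2)) :=
      hmeasq.log.neg.ennreal_ofReal
    set A : E → ℝ≥0∞ := fun e₁ => ∫⁻ e₂, ENNReal.ofReal (Real.log (mbar m (κ e₁) e₂)) ∂ν₁
      with hA
    set B : E → ℝ≥0∞ := fun e₁ => ∫⁻ e₂, ENNReal.ofReal (-Real.log (mbar m (κ e₁) e₂)) ∂ν₁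
      with hB
    have hAmeas : Measurable A := hF.lintegral_prod_right'
    have hBmeas : Measurable B := hG.lintegral_prod_right'
    have hTA : ∫⁻ q : E × E, ENNReal.ofReal (Real.log (mbar m (κ q.1) q.2)) ∂(ν₁.prod ν₁)
        = ∫⁻ e₁, A e₁ ∂ν₁ := MeasureTheory.lintegral_prod _ hF.aemeasurable
    have hTB : ∫⁻ q : E × E, ENNReal.ofReal (-Real.log (mbar m (κ q.1) q.2)) ∂(ν₁.prod ν₁)
        = ∫⁻ e₁, B e₁ ∂ν₁ := MeasureTheory.lintegral_prod _ hG.aemeasurable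
    have hAle : ∀ e₁, A e₁ ≤ c := by
      intro e₁
      calc A e₁ ≤ ∫⁻ _, c ∂ν₁ := lintegral_mono fun e₂ =>
            hlogbd _ (hmbar_nonneg _ _) (hmbarM _ inferInstance _)
        _ = c := by simp
    have hAne : ∀ e₁, A e₁ ≠ ⊤ := fun e₁ => ((hAle e₁).trans_lt hcne.lt_top).ne
    have hIAle : ∫⁻ e₁, A e₁ ∂ν₁ ≤ c := by
      calc ∫⁻ e₁, A e₁ ∂ν₁ ≤ ∫⁻ _, c ∂ν₁ := lintegral_mono hAle
        _ = c := by simp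
    have hIAne : ∫⁻ e₁, A e₁ ∂ν₁ ≠ ⊤ := (hIAle.trans_lt hcne.lt_top).ne
    have hgrowth_eq : ∀ e₁, growth m ν₁ (κ e₁) = ((A e₁ : ℝ≥0∞) : EReal) - ((B e₁ : ℝ≥0∞) : EReal) :=
      fun e₁ => rfl
    have hgle : ∀ e₁, growth m ν₁ (κ e₁) ≤ gammaStar m ν₁ := fun e₁ =>
      le_iSup (fun p : {q : Measure T // IsProbabilityMeasure q} => growth m ν₁ (p : Measure T))
        ⟨κ e₁, inferInstance⟩
    show growthSensing m (ν₁.prod ν₁) κ ≤ gammaStar m ν₁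
    unfold growthSensing
    rw [hTA, hTB]
    by_cases hBtop : ∫⁻ e₁, B e₁ ∂ν₁ = ⊤
    · rw [hBtop]
      rw [EReal.coe_ennreal_top, EReal.sub_top]
      exact bot_le
    · rcases eq_top_or_lt_top (gammaStar m ν₁) with htop | hlt
      · rw [htop]; exact le_top
      have hBae : ∀ᵐ e₁ ∂ν₁, B e₁ < ⊤ := ae_lt_top hBmeas hBtop
      have hne_bot : gammaStar m ν₁ ≠ ⊥ := by
        intro hbot
        obtain ⟨e₁, he⟩ := hBae.exists
        have h1 := hgle e₁
        rw [hbot, le_bot_iff, hgrowth_eq e₁, coeE _ (hAne e₁), coeE _ he.ne,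
          ← EReal.coe_sub] at h1
        exact EReal.coe_ne_bot _ h1
      set r : ℝ := (gammaStar m ν₁).toReal with hrdef
      have hr : gammaStar m ν₁ = (r : EReal) := (EReal.coe_toReal hlt.ne hne_bot).symm
      have hptwise : ∀ᵐ e₁ ∂ν₁, (A e₁).toReal ≤ (B e₁).toReal + r := by
        filter_upwards [hBae] with e₁ hBe
        have h1 := hgle e₁
        rw [hgrowth_eq e₁, coeE _ (hAne e₁), coeE _ hBe.ne, ← EReal.coe_sub, hr,
          EReal.coe_le_coe_iff] at h1
        linarith
      have hBint : Integrable (fun e₁ => (B e₁).toReal) ν₁ :=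
        integrable_toReal_of_lintegral_ne_top hBmeas.aemeasurable hBtop
      have hAint : Integrable (fun e₁ => (A e₁).toReal) ν₁ :=
        integrable_toReal_of_lintegral_ne_top hAmeas.aemeasurable hIAne
      have hInt : ∫ e₁, (A e₁).toReal ∂ν₁ ≤ ∫ e₁, ((B e₁).toReal + r) ∂ν₁ :=
        integral_mono_ae hAint (hBint.add (integrable_const r)) hptwise
      rw [integral_add hBint (integrable_const r), integral_const, probReal_univ] at hInt
      simp only [ENNReal.toReal_one, one_smul] at hInt
      have h1 : ∫ e₁, (A e₁).toReal ∂ν₁ = (∫⁻ e₁, A e₁ ∂ν₁).toReal :=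
        integral_toReal hAmeas.aemeasurable
          (ae_of_all _ fun e₁ => (hAle e₁).trans_lt hcne.lt_top)
      have h2 : ∫ e₁, (B e₁).toReal ∂ν₁ = (∫⁻ e₁, B e₁ ∂ν₁).toReal :=
        integral_toReal hBmeas.aemeasurable hBae
      rw [h1, h2] at hInt
      rw [coeE _ hIAne, coeE _ hBtop, ← EReal.coe_sub, hr, EReal.coe_le_coe_iff]
      linarith
  -- direction ≥ : constant kernels realize every strategy without sensing
  have hge : gammaStar m ν₁ ≤ gammaStarStar m (ν₁.prod ν₁) := by
    refine iSup_le ?_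
    rintro ⟨p, hp⟩
    haveI := hp
    rw [← hconst p hp]
    exact le_iSup
      (fun pbar : {κ : Kernel E T // IsMarkovKernel κ} =>
        growthSensing m (ν₁.prod ν₁) (pbar : Kernel E T))
      ⟨Kernel.const E p, inferInstance⟩
  exact le_antisymm hle hge
end

section
/- In the two-trait/two-environment no-sensing model, suppose neither pure-optimality condition holds, i.e. ν₁(e₁)m_{t₁,e₁}/m_{t₂,e₁} + ν₁(e₂)m_{t₁,e₂}/m_{t₂,e₂} > 1 and ν₁(e₁)m_{t₂,e₁}/m_{t₁,e₁} + ν₁(e₂)m_{t₂,e₂}/m_{t₁,e₂} > 1. Then the optimal strategy is p* = a δ_{t₁} + b δ_{t₂} with a = ν₁(e₁)m_{t₂,e₂}/(m_{t₂,e₂}−m_{t₁,e₂}) + ν₁(e₂)m_{t₂,e₁}/(m_{t₂,e₁}−m_{t₁,e₁}) and b = ν₁(e₁)m_{t₁,e₂}/(m_{t₁,e₂}−m_{t₂,e₂}) + ν₁(e₂)m_{t₁,e₁}/(m_{t₁,e₁}−m_{t₂,e₁}), and the optimal growth rate is γ* = log|m_{t₁,e₁}m_{t₂,e₂} − m_{t₁,e₂}m_{t₂,e₁}|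 − ν₁(e₁)log|m_{t₂,e₂}−m_{t₁,e₂}| − ν₁(e₂)log|m_{t₂,e₁}−m_{t₁,e₁}| + ν₁(e₁)log ν₁(e₁) + ν₁(e₂)log ν₁(e₂). -/
set_option maxHeartbeats 2000000 in
theorem two_trait_aux
    (w1 w2 m11 m21 m12 m22 : ℝ)
    (hw1 : 0 < w1) (hw2 : 0 < w2) (hw : w1 + w2 = 1)
    (hm11 : 0 < m11) (hm21 : 0 < m21) (hm12 : 0 < m12) (hm22 : 0 < m22)
    (h1 : m21 < m11) (h2 : m12 < m22)
    (hcond1 : 1 < w1 * m11 / m21 + w2 * m12 / m22)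
    (hcond2 : 1 < w1 * m21 / m11 + w2 * m22 / m12) :
    0 ≤ w1 * m22 / (m22 - m12) + w2 * m21 / (m21 - m11) ∧
    0 ≤ w1 * m12 / (m12 - m22) + w2 * m11 / (m11 - m21) ∧
    (w1 * m22 / (m22 - m12) + w2 * m21 / (m21 - m11)) +
        (w1 * m12 / (m12 - m22) + w2 * m11 / (m11 - m21)) = 1 ∧
    (∀ p ∈ Set.Icc (0 : ℝ) 1,
      w1 * Real.log (p * m11 + (1 - p) * m21) + w2 * Real.log (p * m12 + (1 - p) * m22) ≤
        w1 * Real.log ((w1 * m22 / (m22 - m12) + w2 * m21 / (m21 - m11)) * m11 +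
            (1 - (w1 * m22 / (m22 - m12) + w2 * m21 / (m21 - m11))) * m21) +
          w2 * Real.log ((w1 * m22 / (m22 - m12) + w2 * m21 / (m21 - m11)) * m12 +
            (1 - (w1 * m22 / (m22 - m12) + w2 * m21 / (m21 - m11))) * m22)) ∧
    (∀ p ∈ Set.Icc (0 : ℝ) 1,
      w1 * Real.log (p * m11 + (1 - p) * m21) + w2 * Real.log (p * m12 + (1 - p) * m22) =
        w1 * Real.log ((w1 * m22 / (m22 - m12) + w2 * m21 / (m21 - m11)) * m11 +
            (1 - (w1 * m22 / (m22 - m12) + w2 * m21 / (m21 - m11))) * m21) +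
          w2 * Real.log ((w1 * m22 / (m22 - m12) + w2 * m21 / (m21 - m11)) * m12 +
            (1 - (w1 * m22 / (m22 - m12) + w2 * m21 / (m21 - m11))) * m22) →
        p = w1 * m22 / (m22 - m12) + w2 * m21 / (m21 - m11)) ∧
    w1 * Real.log ((w1 * m22 / (m22 - m12) + w2 * m21 / (m21 - m11)) * m11 +
          (1 - (w1 * m22 / (m22 - m12) + w2 * m21 / (m21 - m11))) * m21) +
        w2 * Real.log ((w1 * m22 / (m22 - m12) + w2 * m21 / (m21 - m11)) * m12 +
          (1 - (w1 * m22 / (m22 - m12) + w2 * m21 / (m21 - m11))) * m22) =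
      Real.log |m11 * m22 - m12 * m21| - w1 * Real.log |m22 - m12| -
        w2 * Real.log |m21 - m11| + w1 * Real.log w1 + w2 * Real.log w2 := by
  obtain rfl : w2 = 1 - w1 := by linarith
  have hd1 : 0 < m11 - m21 := by linarith
  have hd2 : 0 < m22 - m12 := by linarith
  have hd1' : m21 - m11 ≠ 0 := by intro h; linarith [sub_eq_zero.mp h]
  have hd2' : m12 - m22 ≠ 0 := by intro h; linarith [sub_eq_zero.mp h]
  have hD : 0 < m11 * m22 - m12 * m21 := by nlinarith
  set a := w1 * m22 / (m22 - m12) + (1 - w1) * m21 / (m21 - m11) with ha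
  set b := w1 * m12 / (m12 - m22) + (1 - w1) * m11 / (m11 - m21) with hb
  clear_value a b
  -- closed forms
  have hL1 : a * m11 + (1 - a) * m21 = w1 * (m11 * m22 - m12 * m21) / (m22 - m12) := by
    rw [ha]; field_simp; ring
  have hL2 : a * m12 + (1 - a) * m22 = (1 - w1) * (m11 * m22 - m12 * m21) / (m11 - m21) := by
    rw [ha]; field_simp; ring
  have hL1pos : 0 < a * m11 + (1 - a) * m21 := by rw [hL1]; exact div_pos (mul_pos hw1 hD) hd2
  have hL2pos : 0 < a * m12 + (1 - a) * m22 := by rw [hL2]; exact div_pos (mul_pos hw2 hD) hd1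
  -- positivity of a and b
  have hc1 : m21 * m22 < w1 * m11 * m22 + (1 - w1) * m12 * m21 := by
    rw [div_add_div _ _ (ne_of_gt hm21) (ne_of_gt hm22),
      lt_div_iff₀ (mul_pos hm21 hm22)] at hcond1
    nlinarith [hcond1]
  have hc2 : m11 * m12 < w1 * m21 * m12 + (1 - w1) * m22 * m11 := by
    rw [div_add_div _ _ (ne_of_gt hm11) (ne_of_gt hm12),
      lt_div_iff₀ (mul_pos hm11 hm12)] at hcond2
    nlinarith [hcond2]
  have hapos : 0 < a := by
    rw [ha, show w1 * m22 / (m22 - m12) + (1 - w1) * m21 / (m21 - m11)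
        = (w1 * m11 * m22 + (1 - w1) * m12 * m21 - m21 * m22) / ((m11 - m21) * (m22 - m12)) by
      field_simp; ring]
    exact div_pos (by linarith) (mul_pos hd1 hd2)
  have hbpos : 0 < b := by
    rw [hb, show w1 * m12 / (m12 - m22) + (1 - w1) * m11 / (m11 - m21)
        = (w1 * m21 * m12 + (1 - w1) * m22 * m11 - m11 * m12) / ((m11 - m21) * (m22 - m12)) by
      field_simp; ring]
    exact div_pos (by linarith) (mul_pos hd1 hd2)
  have hab : a + b = 1 := by
    rw [ha, hb]; field_simp; ring
  refine ⟨hapos.le, hbpos.le, hab, ?_, ?_, ?_⟩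
  · -- maximizer
    rintro p ⟨hp0, hp1⟩
    have hP1 : 0 < p * m11 + (1 - p) * m21 := by
      nlinarith [mul_nonneg hp0 (sub_nonneg.mpr h1.le)]
    have hP2 : 0 < p * m12 + (1 - p) * m22 := by
      nlinarith [mul_nonneg (sub_nonneg.mpr hp1) (sub_nonneg.mpr h2.le)]
    have key : w1 * ((p * m11 + (1 - p) * m21) / (a * m11 + (1 - a) * m21))
        + (1 - w1) * ((p * m12 + (1 - p) * m22) / (a * m12 + (1 - a) * m22)) = 1 := by
      rw [hL1, hL2]; field_simp; rw [div_eq_one_iff_eq (by rw [mul_comm m21 m12]; exact hD.ne')]; ring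
    have l1 : Real.log (p * m11 + (1 - p) * m21) - Real.log (a * m11 + (1 - a) * m21)
        ≤ (p * m11 + (1 - p) * m21) / (a * m11 + (1 - a) * m21) - 1 := by
      rw [← Real.log_div hP1.ne' hL1pos.ne']
      exact Real.log_le_sub_one_of_pos (div_pos hP1 hL1pos)
    have l2 : Real.log (p * m12 + (1 - p) * m22) - Real.log (a * m12 + (1 - a) * m22)
        ≤ (p * m12 + (1 - p) * m22) / (a * m12 + (1 - a) * m22) - 1 := by
      rw [← Real.log_div hP2.ne' hL2pos.ne']
      exact Real.log_le_sub_one_of_pos (div_pos hP2 hL2pos)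
    nlinarith [mul_le_mul_of_nonneg_left l1 hw1.le, mul_le_mul_of_nonneg_left l2 hw2.le]
  · -- uniqueness
    rintro p ⟨hp0, hp1⟩ heq
    by_contra hpa
    have hP1 : 0 < p * m11 + (1 - p) * m21 := by
      nlinarith [mul_nonneg hp0 (sub_nonneg.mpr h1.le)]
    have hP2 : 0 < p * m12 + (1 - p) * m22 := by
      nlinarith [mul_nonneg (sub_nonneg.mpr hp1) (sub_nonneg.mpr h2.le)]
    have key : w1 * ((p * m11 + (1 - p) * m21) / (a * m11 + (1 - a) * m21))
        + (1 - w1) * ((p * m12 + (1 - p) * m22) / (a * m12 + (1 - a) * m22)) = 1 := by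
      rw [hL1, hL2]; field_simp; rw [div_eq_one_iff_eq (by rw [mul_comm m21 m12]; exact hD.ne')]; ring
    have hP1ne : p * m11 + (1 - p) * m21 ≠ a * m11 + (1 - a) * m21 := by
      intro h
      have h0 : (p - a) * (m11 - m21) = 0 := by linear_combination h
      rcases mul_eq_zero.mp h0 with h' | h'
      · exact hpa (by linarith)
      · exact hd1.ne' (by linarith)
    have l1 : Real.log (p * m11 + (1 - p) * m21) - Real.log (a * m11 + (1 - a) * m21)
        < (p * m11 + (1 - p) * m21) / (a * m11 + (1 - a) * m21) - 1 := by
      rw [← Real.log_div hP1.ne' hL1pos.ne']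
      refine Real.log_lt_sub_one_of_pos (div_pos hP1 hL1pos) ?_
      intro h
      exact hP1ne ((div_eq_one_iff_eq hL1pos.ne').mp h)
    have l2 : Real.log (p * m12 + (1 - p) * m22) - Real.log (a * m12 + (1 - a) * m22)
        ≤ (p * m12 + (1 - p) * m22) / (a * m12 + (1 - a) * m22) - 1 := by
      rw [← Real.log_div hP2.ne' hL2pos.ne']
      exact Real.log_le_sub_one_of_pos (div_pos hP2 hL2pos)
    nlinarith [mul_lt_mul_of_pos_left l1 hw1, mul_le_mul_of_nonneg_left l2 hw2.le]
  · -- value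
    rw [hL1, hL2, abs_of_pos hD, abs_of_pos hd2, abs_sub_comm m21 m11, abs_of_pos hd1,
      Real.log_div (mul_pos hw1 hD).ne' hd2.ne', Real.log_div (mul_pos hw2 hD).ne' hd1.ne',
      Real.log_mul hw1.ne' hD.ne', Real.log_mul hw2.ne' hD.ne']
    ring

/-- the two-trait/two-environment no-sensing model. Here `w1 = ν₁(e₁)`,
`w2 = ν₁(e₂)`, `m11 = m_{t₁,e₁}`, `m21 = m_{t₂,e₁}`, `m12 = m_{t₁,e₂}`, `m22 = m_{t₂,e₂}`,
and a strategy `p = p({t₁}) ∈ [0,1]` has growth rate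
`f p = w1 log(p m11 + (1−p) m21) + w2 log(p m12 + (1−p) m22)`.
If neither pure-optimality condition holds, i.e.
`w1 m11/m21 + w2 m12/m22 > 1` and `w1 m21/m11 + w2 m22/m12 > 1`, then the optimal
strategy is `p* = a δ_{t₁} + b δ_{t₂}` with
`a = w1 m22/(m22−m12) + w2 m21/(m21−m11)` and `b = w1 m12/(m12−m22) + w2 m11/(m11−m21)`
(in particular `a, b ≥ 0`, `a + b = 1` and `a` is the unique maximizer of `f` over `[0,1]`),
and the optimal growth rate is
`γ* = log|m11 m22 − m12 m21| − w1 log|m22−m12| − w2 log|m21−m11| + w1 log w1 + w2 log w2`. -/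
theorem two_trait_two_env_optimal
    (w1 w2 m11 m21 m12 m22 : ℝ)
    (hw1 : 0 < w1) (hw2 : 0 < w2) (hw : w1 + w2 = 1)
    (hm11 : 0 < m11) (hm21 : 0 < m21) (hm12 : 0 < m12) (hm22 : 0 < m22)
    (hne1 : m11 ≠ m21) (hne2 : m12 ≠ m22)
    (hcond1 : 1 < w1 * m11 / m21 + w2 * m12 / m22)
    (hcond2 : 1 < w1 * m21 / m11 + w2 * m22 / m12) :
    0 ≤ w1 * m22 / (m22 - m12) + w2 * m21 / (m21 - m11) ∧
    0 ≤ w1 * m12 / (m12 - m22) + w2 * m11 / (m11 - m21) ∧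
    (w1 * m22 / (m22 - m12) + w2 * m21 / (m21 - m11)) +
        (w1 * m12 / (m12 - m22) + w2 * m11 / (m11 - m21)) = 1 ∧
    (∀ p ∈ Set.Icc (0 : ℝ) 1,
      w1 * Real.log (p * m11 + (1 - p) * m21) + w2 * Real.log (p * m12 + (1 - p) * m22) ≤
        w1 * Real.log ((w1 * m22 / (m22 - m12) + w2 * m21 / (m21 - m11)) * m11 +
            (1 - (w1 * m22 / (m22 - m12) + w2 * m21 / (m21 - m11))) * m21) +
          w2 * Real.log ((w1 * m22 / (m22 - m12) + w2 * m21 / (m21 - m11)) * m12 +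
            (1 - (w1 * m22 / (m22 - m12) + w2 * m21 / (m21 - m11))) * m22)) ∧
    (∀ p ∈ Set.Icc (0 : ℝ) 1,
      w1 * Real.log (p * m11 + (1 - p) * m21) + w2 * Real.log (p * m12 + (1 - p) * m22) =
        w1 * Real.log ((w1 * m22 / (m22 - m12) + w2 * m21 / (m21 - m11)) * m11 +
            (1 - (w1 * m22 / (m22 - m12) + w2 * m21 / (m21 - m11))) * m21) +
          w2 * Real.log ((w1 * m22 / (m22 - m12) + w2 * m21 / (m21 - m11)) * m12 +
            (1 - (w1 * m22 / (m22 - m12) + w2 * m21 / (m21 - m11))) * m22) →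
        p = w1 * m22 / (m22 - m12) + w2 * m21 / (m21 - m11)) ∧
    w1 * Real.log ((w1 * m22 / (m22 - m12) + w2 * m21 / (m21 - m11)) * m11 +
          (1 - (w1 * m22 / (m22 - m12) + w2 * m21 / (m21 - m11))) * m21) +
        w2 * Real.log ((w1 * m22 / (m22 - m12) + w2 * m21 / (m21 - m11)) * m12 +
          (1 - (w1 * m22 / (m22 - m12) + w2 * m21 / (m21 - m11))) * m22) =
      Real.log |m11 * m22 - m12 * m21| - w1 * Real.log |m22 - m12| -
        w2 * Real.log |m21 - m11| + w1 * Real.log w1 + w2 * Real.log w2 := by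

  rcases lt_or_gt_of_ne hne1 with hlt1 | hgt1 <;> rcases lt_or_gt_of_ne hne2 with hlt2 | hgt2
  · -- m11 < m21, m12 < m22 : contradicts hcond1
    exfalso
    have e1 : w1 * m11 / m21 < w1 := by rw [div_lt_iff₀ hm21]; nlinarith
    have e2 : w2 * m12 / m22 < w2 := by rw [div_lt_iff₀ hm22]; nlinarith
    linarith
  · -- m11 < m21, m22 < m12 : swapped case
    obtain ⟨R1, R2, R3, R4, R5, R6⟩ :=
      two_trait_aux w2 w1 m12 m22 m11 m21 hw2 hw1 (by linarith) hm12 hm22 hm11 hm21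
        hgt2 hlt1 (by linarith) (by linarith)
    have ea : w2 * m21 / (m21 - m11) + w1 * m22 / (m22 - m12)
        = w1 * m22 / (m22 - m12) + w2 * m21 / (m21 - m11) := by ring
    have eb : w2 * m11 / (m11 - m21) + w1 * m12 / (m12 - m22)
        = w1 * m12 / (m12 - m22) + w2 * m11 / (m11 - m21) := by ring
    rw [ea] at R1 R3 R4 R5 R6
    rw [eb] at R2 R3
    rw [abs_sub_comm (m12 * m21)] at R6
    refine ⟨R1, R2, by linarith, ?_, ?_, by linarith⟩
    · intro p hp; linarith [R4 p hp]
    · intro p hp heq; exact R5 p hp (by linarith)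
  · -- m21 < m11, m12 < m22 : direct case
    exact two_trait_aux w1 w2 m11 m21 m12 m22 hw1 hw2 hw hm11 hm21 hm12 hm22
      hgt1 hlt2 hcond1 hcond2
  · -- m21 < m11, m22 < m12 : contradicts hcond2
    exfalso
    have e1 : w1 * m21 / m11 < w1 := by rw [div_lt_iff₀ hm11]; nlinarith
    have e2 : w2 * m22 / m12 < w2 := by rw [div_lt_iff₀ hm12]; nlinarith
    linarith
end
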